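/- arXiv:0812.2718 — 2 statements merged into one kernel-verified Lean document; each statement's English description precedes it below -/
import Mathlib

section
/- Let 𝔽 = ⟨a,b⟩ be the free group of rank 2. Let p ∈ (0, 1/2), let L = {0, 1, *} with the probability measure λ given by λ({0}) = λ({1}) = p and λ({*}) = 1 − 2p, where {0,1} is identified with ℤ/2ℤ, and let M be the disjoint union of ℤ/2ℤ × ℤ/2ℤ and {*} with the probability measure μ given by μ({z}) = p/2 for each z ∈ ℤ/2ℤ × ℤ/2ℤ and μ({*}) = 1 − 2p. Define φ: L^𝔽 → M^𝔽 as follows: for x ∈ L^𝔽 and g ∈ 𝔽, set φ(x)(g) = * if x(g) = *, and otherwise φ(x)(g) = (x(g) + x(ga^k), x(g) + x(gb^l)) ∈ ℤ/2ℤ × ℤ/2ℤ, where k, l > 0 are the smallest positive integers such that x(ga^k) ∈ ℤ/2ℤ and x(gb^l) ∈ ℤ/2ℤ. Then φ is defined on a set of full λ^𝔽-measure and is a factor map from the Bernoulli shift (𝔽, L^𝔽, λ^𝔽) onto the Bernoulli shift (𝔽, M^𝔽, μ^𝔽). -/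
open MeasureTheory ENNReal

/-- The Bernoulli shift action of a group `G` on `G → K`: `(g • x) f = x (g⁻¹ * f)`. -/
def bshift (G K : Type*) [Group G] (g : G) (x : G → K) : G → K :=
  fun f => x (g⁻¹ * f)

/-- `μ` is the product of the probability measures `κ i`: it is a probability measure
giving every measurable cylinder set the product of the measures of its sides.
(For probability measures this characterizes the product measure uniquely.) -/
def IsProductMeasure {ι : Type*} {K : ι → Type*} [∀ i, MeasurableSpace (K i)]
    (μ : Measure (∀ i, K i)) (κ : ∀ i, Measure (K i)) : Prop :=
  IsProbabilityMeasure μ ∧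
    ∀ (s : Finset ι) (A : ∀ i, Set (K i)), (∀ i ∈ s, MeasurableSet (A i)) →
      μ {x | ∀ i ∈ s, x i ∈ A i} = ∏ i ∈ s, κ i (A i)

/-- `φ` is a factor map, from the system given by the maps `T g` on `(X, μ)` to the system
given by the maps `S g` on `(Y, ν)`, relative to the invariant set `X'` of full measure. -/
def IsFactorMapOn {ι X Y : Type*} [MeasurableSpace X] [MeasurableSpace Y]
    (T : ι → X → X) (S : ι → Y → Y) (μ : Measure X) (ν : Measure Y)
    (φ : X → Y) (X' : Set X) : Prop :=
  Measurable φ ∧ (∀ g, Set.MapsTo (T g) X' X') ∧ μ X'ᶜ = 0 ∧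
    (∀ g, ∀ x ∈ X', φ (T g x) = S g (φ x)) ∧ Measure.map φ μ = ν

/-- `φ` is a factor map from the system `(T, μ)` to the system `(S, ν)`:  it is measurable,
pushes `μ` forward to `ν`, and is equivariant on some invariant set of full measure. -/
def IsFactorMap {ι X Y : Type*} [MeasurableSpace X] [MeasurableSpace Y]
    (T : ι → X → X) (S : ι → Y → Y) (μ : Measure X) (ν : Measure Y)
    (φ : X → Y) : Prop :=
  ∃ X' : Set X, IsFactorMapOn T S μ ν φ X'

/-- `φ` is a measure-conjugacy: a factor map which is injective on the invariant full-measure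
set, with a measurable inverse. -/
def IsMeasureConjugacy {ι X Y : Type*} [MeasurableSpace X] [MeasurableSpace Y]
    (T : ι → X → X) (S : ι → Y → Y) (μ : Measure X) (ν : Measure Y)
    (φ : X → Y) : Prop :=
  ∃ X' : Set X, IsFactorMapOn T S μ ν φ X' ∧ Set.InjOn φ X' ∧
    ∃ ψ : Y → X, Measurable ψ ∧ ∀ x ∈ X', ψ (φ x) = x

/-- The two systems are measurably conjugate: there are factor maps in both directions that
are inverse to each other almost everywhere. -/
def IsMeasConj {ι X Y : Type*} [MeasurableSpace X] [MeasurableSpace Y]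
    (T : ι → X → X) (S : ι → Y → Y) (μ : Measure X) (ν : Measure Y) : Prop :=
  ∃ (φ : X → Y) (ψ : Y → X), IsFactorMap T S μ ν φ ∧ IsFactorMap S T ν μ ψ ∧
    (∀ᵐ x ∂μ, ψ (φ x) = x) ∧ (∀ᵐ y ∂ν, φ (ψ y) = y)

/-- The entropy `H(κ) = -∑ₖ κ({k}) log κ({k}) ∈ [0,∞]` of a measure on a countable space. -/
noncomputable def measEntropy {K : Type*} [MeasurableSpace K] (κ : Measure K) : ℝ≥0∞ :=
  ∑' k : K, ENNReal.ofReal (Real.negMulLog (κ {k}).toReal)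

/-- The free group `𝔽 = ⟨a,b⟩` of rank 2. -/
abbrev F2 : Type := FreeGroup (Fin 2)

/-- The first free generator `a` of `𝔽`. -/
def fa : F2 := FreeGroup.of 0

/-- The second free generator `b` of `𝔽`. -/
def fb : F2 := FreeGroup.of 1

/-- The three-point space `L = {0, 1, *}`, with `{0,1}` identified with `ℤ/2ℤ` and
`* = none`, carrying the discrete σ-algebra. -/
instance : MeasurableSpace (Option (ZMod 2)) := ⊤

/-- The five-point space `M = (ℤ/2ℤ × ℤ/2ℤ) ⊔ {*}`, with `* = none`, carrying the discrete
σ-algebra. -/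
instance : MeasurableSpace (Option (ZMod 2 × ZMod 2)) := ⊤

namespace Weiss
open FreeGroup

instance : Countable F2 := by
  have : Function.Surjective (FreeGroup.mk (α := Fin 2)) := by rintro ⟨L⟩; exact ⟨L, rfl⟩
  exact this.countable

lemma of_pow_inj (i : Fin 2) {k m : ℕ} (h : (FreeGroup.of i) ^ k = (FreeGroup.of i) ^ m) :
    k = m := by
  have := congrArg FreeGroup.toWord h
  simp only [FreeGroup.toWord_of_pow] at this
  simpa using congrArg List.length this

lemma mk_singleton_mul (x : Fin 2 × Bool) (v : F2) :
    FreeGroup.mk [x] * v =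
      FreeGroup.mk (x :: v.toWord) := by
  conv_lhs => rw [← FreeGroup.mk_toWord (x := v)]
  rw [FreeGroup.mul_mk]
  rfl

lemma inv_of_eq (i : Fin 2) : (FreeGroup.of i)⁻¹ = FreeGroup.mk [(i, false)] := by
  rw [FreeGroup.of, FreeGroup.inv_mk]
  rfl

/-- The "half-space indicator": whether the reduced word of `v` does NOT end with `(i, true)`. -/
noncomputable def ff (i : Fin 2) (v : F2) : ZMod 2 :=
  if v.toWord.getLast? = some (i, true) then 0 else 1

lemma toWord_step (x : Fin 2 × Bool) (v : F2) :
    (FreeGroup.mk [x] * v).toWord =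
      List.casesOn v.toWord [x] fun y t =>
        if x.1 = y.1 ∧ x.2 = !y.2 then t else x :: y :: t := by
  rw [mk_singleton_mul, FreeGroup.toWord_mk, FreeGroup.reduce.cons, FreeGroup.reduce_toWord]

lemma ff_step_ne {i : Fin 2} {x : Fin 2 × Bool} (hx : x.1 ≠ i) (v : F2) :
    ff i (FreeGroup.mk [x] * v) = ff i v := by
  unfold ff
  rw [toWord_step]
  rcases hv : v.toWord with _ | ⟨y, t⟩
  · simp only [List.casesOn]
    have : (some x ≠ some (i, true)) := by
      intro h; apply hx; cases h; rfl
    simp [this]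
  · simp only []
    by_cases hc : x.1 = y.1 ∧ x.2 = !y.2
    · simp only [if_pos hc]
      rcases ht : t with _ | ⟨z, t'⟩
      · have hy : (some y ≠ some (i, true)) := by
          intro h; cases h; exact hx (hc.1)
        simp [hy]
      · simp [List.getLast?_cons_cons]
    · simp only [if_neg hc]
      rcases ht : t with _ | ⟨z, t'⟩
      · simp [List.getLast?_cons_cons]
      · simp [List.getLast?_cons_cons]

lemma of_eq_iff_toWord (i : Fin 2) (v : F2) : v = FreeGroup.of i ↔ v.toWord = [(i, true)] := by
  constructor
  · rintro rfl; simp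
  · intro h
    have := congrArg FreeGroup.mk h
    rwa [FreeGroup.mk_toWord, ← FreeGroup.toWord_of, FreeGroup.mk_toWord] at this

lemma ff_step_inv (i : Fin 2) (v : F2) :
    ff i (FreeGroup.mk [(i, false)] * v) = ff i v + (if v = FreeGroup.of i then 1 else 0) := by
  unfold ff
  rw [toWord_step]
  rcases hv : v.toWord with _ | ⟨y, t⟩
  · have : v ≠ FreeGroup.of i := by
      simp only [Ne, of_eq_iff_toWord, hv]; simp
    simp [this]
  · by_cases hc : (i, false).1 = y.1 ∧ (i, false).2 = !y.2
    · -- y = (i, true)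
      have hy : y = (i, true) := by
        obtain ⟨a, b⟩ := y
        obtain ⟨h1, h2⟩ := hc
        simp at h1 h2
        cases b <;> simp_all
      subst hy
      simp only [if_pos hc]
      rcases ht : t with _ | ⟨z, t'⟩
      · have hvi : v = FreeGroup.of i := by rw [of_eq_iff_toWord, hv, ht]
        simp [hvi]
      · have hvi : v ≠ FreeGroup.of i := by
          simp only [Ne, of_eq_iff_toWord, hv, ht]; simp
        simp [List.getLast?_cons_cons, hvi]
    · have hy : y ≠ (i, true) := by
        rintro rfl; exact hc ⟨rfl, rfl⟩
      have hvi : v ≠ FreeGroup.of i := by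
        simp only [Ne, of_eq_iff_toWord, hv]
        intro h
        exact hy (by injection h)
      simp only [if_neg hc]
      rcases ht : t with _ | ⟨z, t'⟩
      · have hys : (some y ≠ some (i, true)) := fun h => hy (by injection h)
        simp [hys, hvi]
      · simp [List.getLast?_cons_cons, hvi]

lemma ff_pow_ne {i j : Fin 2} (hij : j ≠ i) (l : ℕ) (v : F2) :
    ff i ((FreeGroup.of j)⁻¹ ^ l * v) = ff i v := by
  induction l with
  | zero => simp
  | succ n ih =>
    rw [pow_succ', mul_assoc, inv_of_eq, ff_step_ne (by simpa using hij), ← inv_of_eq, ih]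

open Classical in
lemma ff_pow_inv (i : Fin 2) (k : ℕ) (v : F2) :
    ff i ((FreeGroup.of i)⁻¹ ^ k * v) =
      ff i v + (if ∃ m, 0 < m ∧ m ≤ k ∧ v = FreeGroup.of i ^ m then 1 else 0) := by
  induction k with
  | zero =>
    have h0 : ¬ ∃ m, 0 < m ∧ m ≤ 0 ∧ v = FreeGroup.of i ^ m := by
      rintro ⟨m, h1, h2, -⟩; omega
    rw [if_neg h0]; simp
  | succ n ih =>
    rw [pow_succ', mul_assoc, inv_of_eq, ff_step_inv, ← inv_of_eq, ih]
    have hiff : ((FreeGroup.of i)⁻¹ ^ n * v = FreeGroup.of i) ↔ v = FreeGroup.of i ^ (n + 1) := by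
      rw [inv_pow, inv_mul_eq_iff_eq_mul, ← pow_succ]
    by_cases hv : v = FreeGroup.of i ^ (n + 1)
    · have h1 : ¬ ∃ m, 0 < m ∧ m ≤ n ∧ v = FreeGroup.of i ^ m := by
        rintro ⟨m, hm0, hmn, rfl⟩
        have := of_pow_inj i (hv.symm)
        omega
      have h2 : ∃ m, 0 < m ∧ m ≤ n + 1 ∧ v = FreeGroup.of i ^ m :=
        ⟨n + 1, by omega, le_refl _, hv⟩
      rw [if_pos (hiff.mpr hv), if_neg h1, if_pos h2, add_zero]
    · have h4 : ¬ ((FreeGroup.of i)⁻¹ ^ n * v = FreeGroup.of i) := fun h => hv (hiff.mp h)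
      have h3 : (∃ m, 0 < m ∧ m ≤ n + 1 ∧ v = FreeGroup.of i ^ m) ↔
          (∃ m, 0 < m ∧ m ≤ n ∧ v = FreeGroup.of i ^ m) := by
        constructor
        · rintro ⟨m, h1, h2, hm⟩
          refine ⟨m, h1, ?_, hm⟩
          rcases eq_or_lt_of_le h2 with h | h
          · exact absurd (by rw [h] at hm; exact hm) hv
          · omega
        · rintro ⟨m, h1, h2, hm⟩; exact ⟨m, h1, by omega, hm⟩
      rw [if_neg h4, add_zero, h3]

lemma z2_add_self (a : ZMod 2) : a + a = 0 := by revert a; decide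

lemma key {i₁ i₂ : Fin 2} (h12 : i₂ ≠ i₁) (s' V : Finset F2) (k : F2 → ℕ)
    (hk : ∀ g ∈ s', 0 < k g)
    (hVg : ∀ g ∈ s', g ∈ V) (hVa : ∀ g ∈ s', g * FreeGroup.of i₁ ^ k g ∈ V)
    (nogap : ∀ g ∈ s', ∀ j, 0 < j → j < k g → g * FreeGroup.of i₁ ^ j ∉ V)
    (g₀ : F2) (hg₀ : g₀ ∈ s') :
    ∃ y : F2 → ZMod 2,
      (∀ g ∈ s', y g + y (g * FreeGroup.of i₁ ^ k g) = if g = g₀ then 1 else 0) ∧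
      (∀ g ∈ s', ∀ m : ℕ, y g + y (g * FreeGroup.of i₂ ^ m) = 0) := by
  classical
  set c : F2 := g₀ * FreeGroup.of i₁ ^ k g₀ with hc
  refine ⟨fun w => ff i₁ (w⁻¹ * c), ?_, ?_⟩
  · intro g hg
    have hrw : (g * FreeGroup.of i₁ ^ k g)⁻¹ * c = (FreeGroup.of i₁)⁻¹ ^ (k g) * (g⁻¹ * c) := by
      rw [mul_inv_rev, inv_pow, mul_assoc]
    show ff i₁ (g⁻¹ * c) + ff i₁ ((g * FreeGroup.of i₁ ^ k g)⁻¹ * c) = _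
    rw [hrw, ff_pow_inv, ← add_assoc, z2_add_self, zero_add]
    by_cases hgg : g = g₀
    · subst hgg
      have hex : ∃ m, 0 < m ∧ m ≤ k g ∧ g⁻¹ * c = FreeGroup.of i₁ ^ m :=
        ⟨k g, hk g hg, le_refl _, by rw [hc, inv_mul_cancel_left]⟩
      rw [if_pos hex, if_pos rfl]
    · have hnex : ¬ ∃ m, 0 < m ∧ m ≤ k g ∧ g⁻¹ * c = FreeGroup.of i₁ ^ m := by
        rintro ⟨m, hm0, hmk, hvm⟩
        have hgc : c = g * FreeGroup.of i₁ ^ m := by rw [← hvm, mul_inv_cancel_left]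
        rcases lt_or_eq_of_le hmk with hlt | heq
        · exact (nogap g hg m hm0 hlt) (hgc ▸ hVa g₀ hg₀)
        · subst heq
          rcases lt_trichotomy (k g) (k g₀) with h | h | h
          · -- g = g₀ * of^(k g₀ - k g)
            have hsplit : FreeGroup.of i₁ ^ k g₀ =
                FreeGroup.of i₁ ^ (k g₀ - k g) * FreeGroup.of i₁ ^ k g := by
              rw [← pow_add, Nat.sub_add_cancel (le_of_lt h)]
            have : g * FreeGroup.of i₁ ^ k g
                = (g₀ * FreeGroup.of i₁ ^ (k g₀ - k g)) * FreeGroup.of i₁ ^ k g := by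
              rw [mul_assoc, ← hsplit, ← hc, hgc]
            have hgeq : g = g₀ * FreeGroup.of i₁ ^ (k g₀ - k g) := mul_right_cancel this
            exact (nogap g₀ hg₀ (k g₀ - k g) (by omega) (by have := hk g hg; omega))
              (hgeq ▸ hVg g hg)
          · apply hgg
            apply mul_right_cancel (b := FreeGroup.of i₁ ^ k g)
            rw [hgc.symm, hc, h]
          · -- g₀ = g * of^(k g - k g₀)
            have hsplit : FreeGroup.of i₁ ^ k g =
                FreeGroup.of i₁ ^ (k g - k g₀) * FreeGroup.of i₁ ^ k g₀ := by
              rw [← pow_add, Nat.sub_add_cancel (le_of_lt h)]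
            have : g₀ * FreeGroup.of i₁ ^ k g₀
                = (g * FreeGroup.of i₁ ^ (k g - k g₀)) * FreeGroup.of i₁ ^ k g₀ := by
              rw [mul_assoc, ← hsplit, ← hgc, hc]
            have hgeq : g₀ = g * FreeGroup.of i₁ ^ (k g - k g₀) := mul_right_cancel this
            exact (nogap g hg (k g - k g₀) (by omega) (by have := hk g₀ hg₀; omega))
              (hgeq ▸ hVg g₀ hg₀)
      rw [if_neg hnex, if_neg hgg]
  · intro g hg m
    have hrw : (g * FreeGroup.of i₂ ^ m)⁻¹ * c = (FreeGroup.of i₂)⁻¹ ^ m * (g⁻¹ * c) := by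
      rw [mul_inv_rev, inv_pow, mul_assoc]
    show ff i₁ (g⁻¹ * c) + ff i₁ ((g * FreeGroup.of i₂ ^ m)⁻¹ * c) = _
    rw [hrw, ff_pow_ne h12, z2_add_self]

/-- The linear evaluation map for the counting argument. -/
def Phi (s' V : Finset F2) (k l : F2 → ℕ)
    (hVg : ∀ g ∈ s', g ∈ V) (hVa : ∀ g ∈ s', g * fa ^ k g ∈ V)
    (hVb : ∀ g ∈ s', g * fb ^ l g ∈ V)
    (y : {w // w ∈ V} → ZMod 2) (g : {g // g ∈ s'}) : ZMod 2 × ZMod 2 :=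
  (y ⟨g.1, hVg g.1 g.2⟩ + y ⟨g.1 * fa ^ k g.1, hVa g.1 g.2⟩,
   y ⟨g.1, hVg g.1 g.2⟩ + y ⟨g.1 * fb ^ l g.1, hVb g.1 g.2⟩)

lemma Phi_add (s' V : Finset F2) (k l : F2 → ℕ) (hVg) (hVa) (hVb)
    (y y' : {w // w ∈ V} → ZMod 2) :
    Phi s' V k l hVg hVa hVb (y + y') = Phi s' V k l hVg hVa hVb y + Phi s' V k l hVg hVa hVb y' := by
  funext g
  simp only [Phi, Pi.add_apply, Prod.mk_add_mk, Prod.mk.injEq]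
  constructor <;> ring

lemma Phi_surj (s' V : Finset F2) (k l : F2 → ℕ)
    (hk : ∀ g ∈ s', 0 < k g) (hl : ∀ g ∈ s', 0 < l g)
    (hVg : ∀ g ∈ s', g ∈ V) (hVa : ∀ g ∈ s', g * fa ^ k g ∈ V)
    (hVb : ∀ g ∈ s', g * fb ^ l g ∈ V)
    (nogapa : ∀ g ∈ s', ∀ j, 0 < j → j < k g → g * fa ^ j ∉ V)
    (nogapb : ∀ g ∈ s', ∀ j, 0 < j → j < l g → g * fb ^ j ∉ V) :
    Function.Surjective (Phi s' V k l hVg hVa hVb) := by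
  classical
  intro r
  have hA : ∀ g₀ : {g // g ∈ s'}, ∃ y : F2 → ZMod 2,
      (∀ g ∈ s', y g + y (g * fa ^ k g) = if g = g₀.1 then 1 else 0) ∧
      (∀ g ∈ s', ∀ m : ℕ, y g + y (g * fb ^ m) = 0) := by
    intro g₀
    exact key (i₁ := 0) (i₂ := 1) (by decide) s' V k hk hVg (by simpa [fa] using hVa)
      (by simpa [fa] using nogapa) g₀.1 g₀.2
  have hB : ∀ g₀ : {g // g ∈ s'}, ∃ y : F2 → ZMod 2,
      (∀ g ∈ s', y g + y (g * fb ^ l g) = if g = g₀.1 then 1 else 0) ∧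
      (∀ g ∈ s', ∀ m : ℕ, y g + y (g * fa ^ m) = 0) := by
    intro g₀
    exact key (i₁ := 1) (i₂ := 0) (by decide) s' V l hl hVg (by simpa [fb] using hVb)
      (by simpa [fb] using nogapb) g₀.1 g₀.2
  choose ya hya1 hya2 using hA
  choose yb hyb1 hyb2 using hB
  set Y : {w // w ∈ V} → ZMod 2 := ∑ g₀ : {g // g ∈ s'},
      (((r g₀).1 • fun w : {w // w ∈ V} => ya g₀ w.1) +
       ((r g₀).2 • fun w : {w // w ∈ V} => yb g₀ w.1)) with hY
  have expand : ∀ (A B : {w // w ∈ V}),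
      Y A + Y B = ∑ g₀ : {g // g ∈ s'},
          ((r g₀).1 * (ya g₀ A.1 + ya g₀ B.1) + (r g₀).2 * (yb g₀ A.1 + yb g₀ B.1)) := by
    intro A B
    rw [hY, Finset.sum_apply, Finset.sum_apply, ← Finset.sum_add_distrib]
    apply Finset.sum_congr rfl
    intro g₀ _
    simp only [Pi.add_apply, Pi.smul_apply, smul_eq_mul]
    ring
  refine ⟨Y, ?_⟩
  funext g
  show (Y ⟨g.1, hVg g.1 g.2⟩ + Y ⟨g.1 * fa ^ k g.1, hVa g.1 g.2⟩,
        Y ⟨g.1, hVg g.1 g.2⟩ + Y ⟨g.1 * fb ^ l g.1, hVb g.1 g.2⟩) = r g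
  rw [Prod.ext_iff]
  refine ⟨?_, ?_⟩
  · show Y _ + Y _ = (r g).1
    rw [expand]
    have hterm : ∀ g₀ : {g // g ∈ s'},
        (r g₀).1 * (ya g₀ g.1 + ya g₀ (g.1 * fa ^ k g.1)) +
        (r g₀).2 * (yb g₀ g.1 + yb g₀ (g.1 * fa ^ k g.1))
        = if g₀ = g then (r g).1 else 0 := by
      intro g₀
      rw [hya1 g₀ g.1 g.2, hyb2 g₀ g.1 g.2]
      by_cases h : g₀ = g
      · subst h; rw [if_pos rfl, if_pos rfl]; ring
      · have hne : ¬ (g.1 = g₀.1) := fun hh => h (Subtype.ext hh).symm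
        rw [if_neg hne, if_neg h]; ring
    rw [Finset.sum_congr rfl (fun g₀ _ => hterm g₀), Finset.sum_ite_eq' Finset.univ g]
    simp
  · show Y _ + Y _ = (r g).2
    rw [expand]
    have hterm : ∀ g₀ : {g // g ∈ s'},
        (r g₀).1 * (ya g₀ g.1 + ya g₀ (g.1 * fb ^ l g.1)) +
        (r g₀).2 * (yb g₀ g.1 + yb g₀ (g.1 * fb ^ l g.1))
        = if g₀ = g then (r g).2 else 0 := by
      intro g₀
      rw [hyb1 g₀ g.1 g.2, hya2 g₀ g.1 g.2]
      by_cases h : g₀ = g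
      · subst h; rw [if_pos rfl, if_pos rfl]; ring
      · have hne : ¬ (g.1 = g₀.1) := fun hh => h (Subtype.ext hh).symm
        rw [if_neg hne, if_neg h]; ring
    rw [Finset.sum_congr rfl (fun g₀ _ => hterm g₀), Finset.sum_ite_eq' Finset.univ g]
    simp

lemma count (s' V : Finset F2) (k l : F2 → ℕ)
    (hk : ∀ g ∈ s', 0 < k g) (hl : ∀ g ∈ s', 0 < l g)
    (hVg : ∀ g ∈ s', g ∈ V) (hVa : ∀ g ∈ s', g * fa ^ k g ∈ V)
    (hVb : ∀ g ∈ s', g * fb ^ l g ∈ V)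
    (nogapa : ∀ g ∈ s', ∀ j, 0 < j → j < k g → g * fa ^ j ∉ V)
    (nogapb : ∀ g ∈ s', ∀ j, 0 < j → j < l g → g * fb ^ j ∉ V)
    (r : {g // g ∈ s'} → ZMod 2 × ZMod 2) :
    (Finset.univ.filter
        (fun y : {w // w ∈ V} → ZMod 2 => Phi s' V k l hVg hVa hVb y = r)).card
      * 4 ^ s'.card = 2 ^ V.card := by
  classical
  set Φ := Phi s' V k l hVg hVa hVb with hΦ
  have hsurj := Phi_surj s' V k l hk hl hVg hVa hVb nogapa nogapb
  -- all fibers have the same cardinality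
  have hfib : ∀ r1 r2 : {g // g ∈ s'} → ZMod 2 × ZMod 2,
      (Finset.univ.filter (fun y => Φ y = r1)).card
        = (Finset.univ.filter (fun y => Φ y = r2)).card := by
    intro r1 r2
    obtain ⟨y1, hy1⟩ := hsurj r1
    obtain ⟨y2, hy2⟩ := hsurj r2
    set d := y1 + y2 with hd
    have hΦd : Φ d = r1 + r2 := by rw [hd, ← hy1, ← hy2, hΦ, Phi_add]
    have hdd : ∀ y : {w // w ∈ V} → ZMod 2, y + d + d = y := by
      intro y; funext w
      simp only [Pi.add_apply]
      rw [add_assoc, z2_add_self, add_zero]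
    have z2a : ∀ a b : ZMod 2, a + (a + b) = b := by decide
    have z2b : ∀ a b : ZMod 2, a + (b + a) = b := by decide
    have haux1 : ∀ u v : {g // g ∈ s'} → ZMod 2 × ZMod 2, u + (u + v) = v := by
      intro u v; funext gg
      show (u gg) + ((u gg) + (v gg)) = v gg
      rw [Prod.ext_iff]
      exact ⟨z2a _ _, z2a _ _⟩
    have haux2 : ∀ u v : {g // g ∈ s'} → ZMod 2 × ZMod 2, u + (v + u) = v := by
      intro u v; funext gg
      show (u gg) + ((v gg) + (u gg)) = v gg
      rw [Prod.ext_iff]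
      exact ⟨z2b _ _, z2b _ _⟩
    apply Finset.card_bij' (fun y _ => y + d) (fun y _ => y + d)
    · intro y hy
      simp only [Finset.mem_filter, Finset.mem_univ, true_and] at hy ⊢
      rw [hΦ, Phi_add, ← hΦ, hy, hΦd, haux1]
    · intro y hy
      simp only [Finset.mem_filter, Finset.mem_univ, true_and] at hy ⊢
      rw [hΦ, Phi_add, ← hΦ, hy, hΦd, haux2]
    · intro y _; exact hdd y
    · intro y _; exact hdd y
  have hsum : (Finset.univ : Finset ({w // w ∈ V} → ZMod 2)).card
      = ∑ r' : {g // g ∈ s'} → ZMod 2 × ZMod 2,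
          (Finset.univ.filter (fun y => Φ y = r')).card :=
    Finset.card_eq_sum_card_fiberwise (fun y _ => Finset.mem_univ (Φ y))
  have hsum2 : (Finset.univ : Finset ({w // w ∈ V} → ZMod 2)).card
      = (Fintype.card ({g // g ∈ s'} → ZMod 2 × ZMod 2))
        * (Finset.univ.filter (fun y => Φ y = r)).card := by
    rw [hsum, Finset.sum_congr rfl (fun r' _ => hfib r' r), Finset.sum_const, Finset.card_univ,
      smul_eq_mul]
  have hc1 : (Finset.univ : Finset ({w // w ∈ V} → ZMod 2)).card = 2 ^ V.card := by
    rw [Finset.card_univ, Fintype.card_fun, ZMod.card, Fintype.card_coe]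
  have hc2 : Fintype.card ({g // g ∈ s'} → ZMod 2 × ZMod 2) = 4 ^ s'.card := by
    rw [Fintype.card_fun, Fintype.card_prod, ZMod.card, Fintype.card_coe]
  rw [← hc1, hsum2, hc2, mul_comm]

abbrev Lo := Option (ZMod 2)
abbrev Mo := Option (ZMod 2 × ZMod 2)

def goodA (x : F2 → Lo) (g : F2) : Prop := ∃ k : ℕ, 0 < k ∧ (x (g * fa ^ k)).isSome
def goodB (x : F2 → Lo) (g : F2) : Prop := ∃ k : ℕ, 0 < k ∧ (x (g * fb ^ k)).isSome

def Xgood : Set (F2 → Lo) := {x | ∀ g, goodA x g ∧ goodB x g}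

open Classical in
noncomputable def hitA (x : F2 → Lo) (g : F2) : ℕ :=
  if h : goodA x g then Nat.find h else 0

open Classical in
noncomputable def hitB (x : F2 → Lo) (g : F2) : ℕ :=
  if h : goodB x g then Nat.find h else 0

open Classical in
noncomputable def phi (x : F2 → Lo) : F2 → Mo := fun g =>
  (x g).elim none (fun i =>
    if goodA x g ∧ goodB x g then
      some (i + (x (g * fa ^ hitA x g)).iget, i + (x (g * fb ^ hitB x g)).iget)
    else none)

lemma phi_none {x : F2 → Lo} {g : F2} (h : x g = none) : phi x g = none := by
  simp [phi, h]

lemma phi_some {x : F2 → Lo} {g : F2} {i : ZMod 2} (h : x g = some i)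
    (hA : goodA x g) (hB : goodB x g) :
    phi x g = some (i + (x (g * fa ^ hitA x g)).iget, i + (x (g * fb ^ hitB x g)).iget) := by
  simp [phi, h, hA, hB]

lemma phi_not_good {x : F2 → Lo} {g : F2} {i : ZMod 2} (h : x g = some i)
    (hng : ¬ (goodA x g ∧ goodB x g)) : phi x g = none := by
  simp [phi, h, hng]

lemma hitA_pos {x : F2 → Lo} {g : F2} (h : goodA x g) : 0 < hitA x g := by
  classical
  rw [hitA, dif_pos h]
  exact (Nat.find_spec h).1

lemma hitA_isSome {x : F2 → Lo} {g : F2} (h : goodA x g) :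
    (x (g * fa ^ hitA x g)).isSome := by
  classical
  rw [hitA, dif_pos h]
  exact (Nat.find_spec h).2

lemma hitA_min {x : F2 → Lo} {g : F2} (h : goodA x g) {j : ℕ} (h0 : 0 < j)
    (hj : j < hitA x g) : x (g * fa ^ j) = none := by
  classical
  rw [hitA, dif_pos h] at hj
  have := Nat.find_min h hj
  rw [not_and] at this
  exact Option.not_isSome_iff_eq_none.mp (this h0)

lemma hitA_eq {x : F2 → Lo} {g : F2} (h : goodA x g) {k : ℕ} (h0 : 0 < k)
    (hs : (x (g * fa ^ k)).isSome)
    (hmin : ∀ j, 0 < j → j < k → x (g * fa ^ j) = none) : hitA x g = k := by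
  classical
  rw [hitA, dif_pos h]
  apply (Nat.find_eq_iff h).mpr
  refine ⟨⟨h0, hs⟩, ?_⟩
  intro j hj
  rintro ⟨hj0, hjs⟩
  rw [hmin j hj0 hj] at hjs
  simp at hjs

lemma hitB_pos {x : F2 → Lo} {g : F2} (h : goodB x g) : 0 < hitB x g := by
  classical
  rw [hitB, dif_pos h]
  exact (Nat.find_spec h).1

lemma hitB_isSome {x : F2 → Lo} {g : F2} (h : goodB x g) :
    (x (g * fb ^ hitB x g)).isSome := by
  classical
  rw [hitB, dif_pos h]
  exact (Nat.find_spec h).2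

lemma hitB_min {x : F2 → Lo} {g : F2} (h : goodB x g) {j : ℕ} (h0 : 0 < j)
    (hj : j < hitB x g) : x (g * fb ^ j) = none := by
  classical
  rw [hitB, dif_pos h] at hj
  have := Nat.find_min h hj
  rw [not_and] at this
  exact Option.not_isSome_iff_eq_none.mp (this h0)

lemma hitB_eq {x : F2 → Lo} {g : F2} (h : goodB x g) {k : ℕ} (h0 : 0 < k)
    (hs : (x (g * fb ^ k)).isSome)
    (hmin : ∀ j, 0 < j → j < k → x (g * fb ^ j) = none) : hitB x g = k := by
  classical
  rw [hitB, dif_pos h]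
  apply (Nat.find_eq_iff h).mpr
  refine ⟨⟨h0, hs⟩, ?_⟩
  intro j hj
  rintro ⟨hj0, hjs⟩
  rw [hmin j hj0 hj] at hjs
  simp at hjs

-- equivariance
lemma bshift_coord (h : F2) (x : F2 → Lo) (g w : F2) :
    bshift F2 Lo h x (g * w) = x ((h⁻¹ * g) * w) := by
  show x (h⁻¹ * (g * w)) = x ((h⁻¹ * g) * w)
  rw [mul_assoc]

lemma goodA_bshift (h : F2) (x : F2 → Lo) (g : F2) :
    goodA (bshift F2 Lo h x) g ↔ goodA x (h⁻¹ * g) := by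
  unfold goodA
  refine exists_congr fun k => and_congr_right fun _ => ?_
  rw [bshift_coord]

lemma goodB_bshift (h : F2) (x : F2 → Lo) (g : F2) :
    goodB (bshift F2 Lo h x) g ↔ goodB x (h⁻¹ * g) := by
  unfold goodB
  refine exists_congr fun k => and_congr_right fun _ => ?_
  rw [bshift_coord]

lemma find_congr {p q : ℕ → Prop} [DecidablePred p] [DecidablePred q]
    (h : ∀ n, p n ↔ q n) (hp : ∃ n, p n) (hq : ∃ n, q n) : Nat.find hp = Nat.find hq :=
  le_antisymm (Nat.find_le ((h _).2 (Nat.find_spec hq)))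
    (Nat.find_le ((h _).1 (Nat.find_spec hp)))

lemma hitA_bshift (h : F2) (x : F2 → Lo) (g : F2) :
    hitA (bshift F2 Lo h x) g = hitA x (h⁻¹ * g) := by
  classical
  unfold hitA
  by_cases hg : goodA x (h⁻¹ * g)
  · rw [dif_pos ((goodA_bshift h x g).mpr hg), dif_pos hg]
    apply find_congr
    intro n
    refine and_congr_right fun _ => ?_
    rw [bshift_coord]
  · rw [dif_neg (fun hc => hg ((goodA_bshift h x g).mp hc)), dif_neg hg]

lemma hitB_bshift (h : F2) (x : F2 → Lo) (g : F2) :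
    hitB (bshift F2 Lo h x) g = hitB x (h⁻¹ * g) := by
  classical
  unfold hitB
  by_cases hg : goodB x (h⁻¹ * g)
  · rw [dif_pos ((goodB_bshift h x g).mpr hg), dif_pos hg]
    apply find_congr
    intro n
    refine and_congr_right fun _ => ?_
    rw [bshift_coord]
  · rw [dif_neg (fun hc => hg ((goodB_bshift h x g).mp hc)), dif_neg hg]

lemma phi_bshift (h : F2) (x : F2 → Lo) :
    phi (bshift F2 Lo h x) = bshift F2 Mo h (phi x) := by
  classical
  funext g
  show phi (bshift F2 Lo h x) g = phi x (h⁻¹ * g)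
  unfold phi
  have hxg : bshift F2 Lo h x g = x (h⁻¹ * g) := rfl
  rw [hxg]
  rcases hv : x (h⁻¹ * g) with _ | i
  · rfl
  · simp only [Option.elim_some]
    rw [goodA_bshift, goodB_bshift, hitA_bshift, hitB_bshift, bshift_coord, bshift_coord]

lemma Xgood_invariant (h : F2) {x : F2 → Lo} (hx : x ∈ Xgood) : bshift F2 Lo h x ∈ Xgood := by
  intro g
  rw [goodA_bshift, goodB_bshift]
  exact hx (h⁻¹ * g)

lemma mSet1 (g : F2) (o : Lo) : MeasurableSet {x : F2 → Lo | x g = o} := by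
  have h : {x : F2 → Lo | x g = o} = (fun x : F2 → Lo => x g) ⁻¹' {o} := rfl
  rw [h]
  exact measurable_pi_apply g trivial

lemma mSet1M (g : F2) (o : Mo) : MeasurableSet {x : F2 → Mo | x g = o} := by
  have h : {x : F2 → Mo | x g = o} = (fun x : F2 → Mo => x g) ⁻¹' {o} := rfl
  rw [h]
  exact measurable_pi_apply g trivial

lemma optSome {α : Type*} [Inhabited α] {o : Option α} (h : o ≠ none) : o = some o.iget := by
  cases o with
  | none => exact absurd rfl h
  | some a => rfl

open Classical in
lemma measurable_phi : Measurable phi := by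
  apply measurable_pi_lambda
  intro g
  apply measurable_to_countable'
  intro m
  have fib_some : ∀ z : ZMod 2 × ZMod 2, (fun x => phi x g) ⁻¹' {some z} =
      ⋃ (i : ZMod 2) (u : ZMod 2) (v : ZMod 2) (_ : (i + u, i + v) = z) (k : ℕ) (l : ℕ)
        (_ : 0 < k) (_ : 0 < l),
        ({x : F2 → Lo | x g = some i} ∩ {x | x (g * fa ^ k) = some u}
          ∩ {x | x (g * fb ^ l) = some v}
          ∩ (⋂ j ∈ Set.Ioo 0 k, {x | x (g * fa ^ j) = none})
          ∩ (⋂ j ∈ Set.Ioo 0 l, {x | x (g * fb ^ j) = none})) := by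
    intro z
    ext x
    simp only [Set.mem_preimage, Set.mem_singleton_iff, Set.mem_iUnion, Set.mem_inter_iff,
      Set.mem_setOf_eq, Set.mem_iInter, Set.mem_Ioo]
    constructor
    · intro hx
      rcases hxg : x g with _ | i
      · rw [phi_none hxg] at hx; exact absurd hx (by simp)
      · by_cases hgood : goodA x g ∧ goodB x g
        · obtain ⟨hA, hB⟩ := hgood
          obtain ⟨u, hu⟩ := Option.isSome_iff_exists.mp (hitA_isSome hA)
          obtain ⟨v, hv⟩ := Option.isSome_iff_exists.mp (hitB_isSome hB)
          rw [phi_some hxg hA hB, hu, hv] at hx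
          simp only [Option.iget_some, Option.some_inj] at hx
          exact ⟨i, u, v, hx, hitA x g, hitB x g, hitA_pos hA, hitB_pos hB,
            ⟨⟨⟨⟨rfl, hu⟩, hv⟩, fun j hj => hitA_min hA hj.1 hj.2⟩,
            fun j hj => hitB_min hB hj.1 hj.2⟩⟩
        · rw [phi_not_good hxg hgood] at hx
          exact absurd hx (by simp)
    · rintro ⟨i, u, v, hz, k, l, hk, hl, ⟨⟨⟨⟨hxg, hu⟩, hv⟩, hgapa⟩, hgapb⟩⟩
      have hA : goodA x g := ⟨k, hk, by rw [hu]; rfl⟩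
      have hB : goodB x g := ⟨l, hl, by rw [hv]; rfl⟩
      have hka : hitA x g = k := hitA_eq hA hk (by rw [hu]; rfl)
        (fun j h1 h2 => hgapa j ⟨h1, h2⟩)
      have hlb : hitB x g = l := hitB_eq hB hl (by rw [hv]; rfl)
        (fun j h1 h2 => hgapb j ⟨h1, h2⟩)
      rw [phi_some hxg hA hB, hka, hlb, hu, hv]
      change some (i + u, i + v) = _
      rw [hz]
  have msome : ∀ z : ZMod 2 × ZMod 2, MeasurableSet ((fun x => phi x g) ⁻¹' {some z}) := by
    intro z
    rw [fib_some z]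
    apply MeasurableSet.iUnion; intro i
    apply MeasurableSet.iUnion; intro u
    apply MeasurableSet.iUnion; intro v
    apply MeasurableSet.iUnion; intro _
    apply MeasurableSet.iUnion; intro k
    apply MeasurableSet.iUnion; intro l
    apply MeasurableSet.iUnion; intro _
    apply MeasurableSet.iUnion; intro _
    refine MeasurableSet.inter (MeasurableSet.inter (MeasurableSet.inter (MeasurableSet.inter
      (mSet1 g (some i)) (mSet1 _ (some u))) (mSet1 _ (some v))) ?_) ?_
    · exact MeasurableSet.biInter (Set.to_countable _) (fun j _ => mSet1 _ none)
    · exact MeasurableSet.biInter (Set.to_countable _) (fun j _ => mSet1 _ none)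
  rcases m with _ | z
  · have hco : (fun x => phi x g) ⁻¹' {none} =
        (⋃ z : ZMod 2 × ZMod 2, (fun x => phi x g) ⁻¹' {some z})ᶜ := by
      ext x
      simp only [Set.mem_preimage, Set.mem_singleton_iff, Set.mem_compl_iff, Set.mem_iUnion]
      rcases phi x g with _ | z <;> simp
    rw [hco]
    exact (MeasurableSet.iUnion msome).compl
  · exact msome z

section Meas
variable {p : ℝ} {lam : Measure Lo} {μL : Measure (F2 → Lo)}

lemma cyl (hμL : IsProductMeasure μL (fun _ : F2 => lam)) (t : Finset F2) (v : F2 → Lo) :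
    μL {x | ∀ g ∈ t, x g = v g} = ∏ g ∈ t, lam {v g} := by
  have h := hμL.2 t (fun g => {v g}) (fun i _ => trivial)
  simpa using h

lemma Xgood_null (hp : 0 < p) (hp' : p < 1/2)
    (hlamstar : lam {none} = ENNReal.ofReal (1 - 2*p))
    (hμL : IsProductMeasure μL (fun _ : F2 => lam)) :
    μL Xgoodᶜ = 0 := by
  haveI := hμL.1
  have hr : ENNReal.ofReal (1 - 2*p) < 1 := by
    rw [← ENNReal.ofReal_one]
    apply ENNReal.ofReal_lt_ofReal_iff_of_nonneg (by linarith) |>.mpr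
    linarith
  have kj : ∀ (ha : F2) (hfa : ∀ k m : ℕ, ha ^ k = ha ^ m → k = m) (g : F2),
      μL {x | ∀ k : ℕ, 0 < k → x (g * ha ^ k) = none} = 0 := by
    intro ha hfa g
    have hle : ∀ n : ℕ, μL {x | ∀ k : ℕ, 0 < k → x (g * ha ^ k) = none}
        ≤ ENNReal.ofReal (1 - 2*p) ^ n := by
      intro n
      have hsub : {x : F2 → Lo | ∀ k : ℕ, 0 < k → x (g * ha ^ k) = none}
          ⊆ {x | ∀ w ∈ (Finset.Icc 1 n).image (fun k => g * ha ^ k), x w = (fun _ => (none : Lo)) w} := by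
        intro x hx w hw
        rw [Finset.mem_image] at hw
        obtain ⟨k, hk, rfl⟩ := hw
        rw [Finset.mem_Icc] at hk
        exact hx k (by omega)
      refine le_trans (measure_mono hsub) ?_
      rw [cyl hμL]
      rw [Finset.prod_const, hlamstar]
      have hcard : ((Finset.Icc 1 n).image (fun k => g * ha ^ k)).card = n := by
        rw [Finset.card_image_of_injOn, Nat.card_Icc]
        · omega
        · intro a _ b _ hab
          exact hfa a b (mul_left_cancel hab)
      rw [hcard]
    have := ge_of_tendsto' (ENNReal.tendsto_pow_atTop_nhds_zero_of_lt_one hr) hle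
    exact nonpos_iff_eq_zero.mp this
  have hfa2 : ∀ k m : ℕ, fa ^ k = fa ^ m → k = m := fun k m h => of_pow_inj 0 h
  have hfb2 : ∀ k m : ℕ, fb ^ k = fb ^ m → k = m := fun k m h => of_pow_inj 1 h
  have hsub : Xgoodᶜ ⊆ ⋃ g : F2,
      ({x : F2 → Lo | ∀ k : ℕ, 0 < k → x (g * fa ^ k) = none}
        ∪ {x | ∀ k : ℕ, 0 < k → x (g * fb ^ k) = none}) := by
    intro x hx
    rw [Set.mem_compl_iff, Xgood, Set.mem_setOf_eq] at hx
    push_neg at hx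
    obtain ⟨g, hg⟩ := hx
    refine Set.mem_iUnion.mpr ⟨g, ?_⟩
    by_cases hA : goodA x g
    · have hB : ¬ goodB x g := hg hA
      right
      intro k hk
      rw [goodB] at hB
      push_neg at hB
      exact Option.not_isSome_iff_eq_none.mp (hB k hk)
    · left
      intro k hk
      rw [goodA] at hA
      push_neg at hA
      exact Option.not_isSome_iff_eq_none.mp (hA k hk)
  apply measure_mono_null hsub
  apply measure_iUnion_null
  intro g
  exact measure_union_null (kj fa hfa2 g) (kj fb hfb2 g)

end Meas

section Decomp
variable (t : Finset F2) (c : F2 → Mo)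

def s1 : Finset F2 := t.filter (fun g => c g ≠ none)
def s0 : Finset F2 := t.filter (fun g => c g = none)

abbrev Idx := {g // g ∈ s1 t c} → ℕ × ℕ

variable (d : Idx t c)

def kk (g : F2) : ℕ := if h : g ∈ s1 t c then (d ⟨g, h⟩).1 else 0
def llf (g : F2) : ℕ := if h : g ∈ s1 t c then (d ⟨g, h⟩).2 else 0

def Vd : Finset F2 :=
  (s1 t c ∪ (s1 t c).image (fun g => g * fa ^ kk t c d g))
    ∪ (s1 t c).image (fun g => g * fb ^ llf t c d g)

def Wd : Finset F2 :=
  (s0 t c ∪ (s1 t c).biUnion (fun g => (Finset.Ioo 0 (kk t c d g)).image (fun j => g * fa ^ j)))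
    ∪ (s1 t c).biUnion (fun g => (Finset.Ioo 0 (llf t c d g)).image (fun j => g * fb ^ j))

def PosD : Prop := ∀ gs : {g // g ∈ s1 t c}, 0 < (d gs).1 ∧ 0 < (d gs).2

def Ad : Set (F2 → Lo) :=
  {x | PosD t c d ∧ (∀ w ∈ Wd t c d, x w = none) ∧ (∀ w ∈ Vd t c d, x w ≠ none)}

def Ed : Set (F2 → Lo) :=
  {x | x ∈ Ad t c d ∧ ∀ g ∈ s1 t c, ∃ i u v : ZMod 2,
      some (i + u, i + v) = c g ∧ x g = some i ∧ x (g * fa ^ kk t c d g) = some u ∧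
      x (g * fb ^ llf t c d g) = some v}

lemma kk_mem {g : F2} (h : g ∈ s1 t c) : kk t c d g = (d ⟨g, h⟩).1 := dif_pos h
lemma llf_mem {g : F2} (h : g ∈ s1 t c) : llf t c d g = (d ⟨g, h⟩).2 := dif_pos h

lemma hVg' : ∀ g ∈ s1 t c, g ∈ Vd t c d :=
  fun g hg => Finset.mem_union_left _ (Finset.mem_union_left _ hg)

lemma hVa' : ∀ g ∈ s1 t c, g * fa ^ kk t c d g ∈ Vd t c d :=
  fun g hg => Finset.mem_union_left _ (Finset.mem_union_right _ (Finset.mem_image_of_mem _ hg))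

lemma hVb' : ∀ g ∈ s1 t c, g * fb ^ llf t c d g ∈ Vd t c d :=
  fun g hg => Finset.mem_union_right _ (Finset.mem_image_of_mem _ hg)

lemma gapA_mem {g : F2} (hg : g ∈ s1 t c) {j : ℕ} (h0 : 0 < j) (hj : j < kk t c d g) :
    g * fa ^ j ∈ Wd t c d :=
  Finset.mem_union_left _ (Finset.mem_union_right _ (Finset.mem_biUnion.mpr
    ⟨g, hg, Finset.mem_image_of_mem _ (Finset.mem_Ioo.mpr ⟨h0, hj⟩)⟩))

lemma gapB_mem {g : F2} (hg : g ∈ s1 t c) {j : ℕ} (h0 : 0 < j) (hj : j < llf t c d g) :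
    g * fb ^ j ∈ Wd t c d :=
  Finset.mem_union_right _ (Finset.mem_biUnion.mpr
    ⟨g, hg, Finset.mem_image_of_mem _ (Finset.mem_Ioo.mpr ⟨h0, hj⟩)⟩)

lemma s0_subW : ∀ g ∈ s0 t c, g ∈ Wd t c d :=
  fun g hg => Finset.mem_union_left _ (Finset.mem_union_left _ hg)

lemma Ad_overlap_a (d' : Idx t c) {x : F2 → Lo} (hx : x ∈ Ad t c d) (hx' : x ∈ Ad t c d')
    (gs : {g // g ∈ s1 t c}) (hlt : (d gs).1 < (d' gs).1) : False := by
  obtain ⟨hP, hW, hV⟩ := hx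
  obtain ⟨hP', hW', hV'⟩ := hx'
  have h1 : x (gs.1 * fa ^ kk t c d gs.1) ≠ none := hV _ (hVa' t c d gs.1 gs.2)
  have h2 : x (gs.1 * fa ^ kk t c d gs.1) = none := by
    apply hW'
    apply gapA_mem t c d' gs.2
    · rw [kk_mem t c d gs.2]; exact (hP gs).1
    · rw [kk_mem t c d gs.2, kk_mem t c d' gs.2]; exact hlt
  exact h1 h2

lemma Ad_overlap_b (d' : Idx t c) {x : F2 → Lo} (hx : x ∈ Ad t c d) (hx' : x ∈ Ad t c d')
    (gs : {g // g ∈ s1 t c}) (hlt : (d gs).2 < (d' gs).2) : False := by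
  obtain ⟨hP, hW, hV⟩ := hx
  obtain ⟨hP', hW', hV'⟩ := hx'
  have h1 : x (gs.1 * fb ^ llf t c d gs.1) ≠ none := hV _ (hVb' t c d gs.1 gs.2)
  have h2 : x (gs.1 * fb ^ llf t c d gs.1) = none := by
    apply hW'
    apply gapB_mem t c d' gs.2
    · rw [llf_mem t c d gs.2]; exact (hP gs).2
    · rw [llf_mem t c d gs.2, llf_mem t c d' gs.2]; exact hlt
  exact h1 h2

lemma Ad_disj : Pairwise (Function.onFun Disjoint (Ad t c)) := by
  intro d d' hne
  rw [Function.onFun, Set.disjoint_left]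
  intro x hx hx'
  have hgs : ∃ gs, d gs ≠ d' gs := by
    by_contra h; push_neg at h; exact hne (funext h)
  obtain ⟨gs, hgs⟩ := hgs
  have hcomp : (d gs).1 ≠ (d' gs).1 ∨ (d gs).2 ≠ (d' gs).2 := by
    by_contra h; push_neg at h; exact hgs (Prod.ext h.1 h.2)
  rcases hcomp with h | h
  · rcases h.lt_or_gt with h | h
    · exact Ad_overlap_a t c d d' hx hx' gs h
    · exact Ad_overlap_a t c d' d hx' hx gs h
  · rcases h.lt_or_gt with h | h
    · exact Ad_overlap_b t c d d' hx hx' gs h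
    · exact Ad_overlap_b t c d' d hx' hx gs h

lemma Ed_subset_Ad : Ed t c d ⊆ Ad t c d := fun _ hx => hx.1

lemma Ed_disj : Pairwise (Function.onFun Disjoint (Ed t c)) := by
  intro d d' hne
  exact Set.disjoint_of_subset (Ed_subset_Ad t c d) (Ed_subset_Ad t c d') (Ad_disj t c hne)

lemma mCyl (u : Finset F2) (v : F2 → Lo) : MeasurableSet {x : F2 → Lo | ∀ g ∈ u, x g = v g} := by
  have h : {x : F2 → Lo | ∀ g ∈ u, x g = v g} = ⋂ g ∈ (u : Set F2), {x | x g = v g} := by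
    ext x; simp
  rw [h]
  exact MeasurableSet.biInter (Finset.countable_toSet u) (fun g _ => mSet1 g (v g))

lemma mCylM (u : Finset F2) (v : F2 → Mo) : MeasurableSet {x : F2 → Mo | ∀ g ∈ u, x g = v g} := by
  have h : {x : F2 → Mo | ∀ g ∈ u, x g = v g} = ⋂ g ∈ (u : Set F2), {x | x g = v g} := by
    ext x; simp
  rw [h]
  exact MeasurableSet.biInter (Finset.countable_toSet u) (fun g _ => mSet1M g (v g))

lemma mAd : MeasurableSet (Ad t c d) := by
  have h : Ad t c d = {x : F2 → Lo | PosD t c d} ∩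
      ((⋂ w ∈ (Wd t c d : Set F2), {x | x w = none}) ∩
        (⋂ w ∈ (Vd t c d : Set F2), {x | x w = none}ᶜ)) := by
    ext x
    simp only [Ad, Set.mem_setOf_eq, Set.mem_inter_iff, Set.mem_iInter, Set.mem_compl_iff,
      Finset.mem_coe]
  rw [h]
  refine (MeasurableSet.const _).inter (MeasurableSet.inter ?_ ?_)
  · exact MeasurableSet.biInter (Finset.countable_toSet _) (fun w _ => mSet1 w none)
  · exact MeasurableSet.biInter (Finset.countable_toSet _) (fun w _ => (mSet1 w none).compl)

lemma mEd : MeasurableSet (Ed t c d) := by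
  have h : Ed t c d = Ad t c d ∩
      ⋂ g ∈ (s1 t c : Set F2), ⋃ (i : ZMod 2) (u : ZMod 2) (v : ZMod 2)
        (_ : some (i + u, i + v) = c g),
        ({x : F2 → Lo | x g = some i} ∩ {x | x (g * fa ^ kk t c d g) = some u}
          ∩ {x | x (g * fb ^ llf t c d g) = some v}) := by
    ext x
    simp only [Ed, Set.mem_setOf_eq, Set.mem_inter_iff, Set.mem_iInter, Set.mem_iUnion,
      Set.mem_inter_iff, Finset.mem_coe, Set.mem_setOf_eq]
    constructor
    · rintro ⟨hA, heq⟩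
      refine ⟨hA, fun g hg => ?_⟩
      obtain ⟨i, u, v, hz, h1, h2, h3⟩ := heq g hg
      exact ⟨i, u, v, hz, ⟨⟨h1, h2⟩, h3⟩⟩
    · rintro ⟨hA, heq⟩
      refine ⟨hA, fun g hg => ?_⟩
      obtain ⟨i, u, v, hz, ⟨⟨h1, h2⟩, h3⟩⟩ := heq g hg
      exact ⟨i, u, v, hz, h1, h2, h3⟩
  rw [h]
  refine (mAd t c d).inter ?_
  refine MeasurableSet.biInter (Finset.countable_toSet _) (fun g _ => ?_)
  apply MeasurableSet.iUnion; intro i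
  apply MeasurableSet.iUnion; intro u
  apply MeasurableSet.iUnion; intro v
  apply MeasurableSet.iUnion; intro _
  exact ((mSet1 g (some i)).inter (mSet1 _ (some u))).inter (mSet1 _ (some v))

lemma Ed_mul_card {p : ℝ} {lam : Measure Lo} {μL : Measure (F2 → Lo)}
    (hlam : ∀ i : ZMod 2, lam {some i} = ENNReal.ofReal p)
    (hlamstar : lam {none} = ENNReal.ofReal (1 - 2*p))
    (hμL : IsProductMeasure μL (fun _ : F2 => lam))
    (hPos : PosD t c d) (hdisj : Disjoint (Wd t c d) (Vd t c d)) :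
    μL (Ed t c d) * 4 ^ (s1 t c).card = μL (Ad t c d) := by
  classical
  have hk : ∀ g ∈ s1 t c, 0 < kk t c d g := fun g hg => by
    rw [kk_mem t c d hg]; exact (hPos ⟨g, hg⟩).1
  have hl : ∀ g ∈ s1 t c, 0 < llf t c d g := fun g hg => by
    rw [llf_mem t c d hg]; exact (hPos ⟨g, hg⟩).2
  have nogapa : ∀ g ∈ s1 t c, ∀ j, 0 < j → j < kk t c d g → g * fa ^ j ∉ Vd t c d :=
    fun g hg j h0 hj => Finset.disjoint_left.mp hdisj (gapA_mem t c d hg h0 hj)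
  have nogapb : ∀ g ∈ s1 t c, ∀ j, 0 < j → j < llf t c d g → g * fb ^ j ∉ Vd t c d :=
    fun g hg j h0 hj => Finset.disjoint_left.mp hdisj (gapB_mem t c d hg h0 hj)
  set vy : ({w // w ∈ Vd t c d} → ZMod 2) → F2 → Lo :=
    fun y g => if h : g ∈ Vd t c d then some (y ⟨g, h⟩) else none with hvy
  set C : ({w // w ∈ Vd t c d} → ZMod 2) → Set (F2 → Lo) :=
    fun y => {x | ∀ g ∈ Wd t c d ∪ Vd t c d, x g = vy y g} with hC
  have hWnone : ∀ y, ∀ w ∈ Wd t c d, vy y w = none :=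
    fun y w hw => dif_neg (Finset.disjoint_left.mp hdisj hw)
  have hVsome : ∀ y w (h : w ∈ Vd t c d), vy y w = some (y ⟨w, h⟩) := fun y w h => dif_pos h
  have memC : ∀ y x, x ∈ C y ↔
      ((∀ w ∈ Wd t c d, x w = none) ∧ ∀ (w) (h : w ∈ Vd t c d), x w = some (y ⟨w, h⟩)) := by
    intro y x
    constructor
    · intro hx
      constructor
      · intro w hw
        rw [hx w (Finset.mem_union_left _ hw), hWnone y w hw]
      · intro w hw
        rw [hx w (Finset.mem_union_right _ hw), hVsome y w hw]
    · rintro ⟨h1, h2⟩ w hw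
      rcases Finset.mem_union.mp hw with hw | hw
      · rw [h1 w hw, hWnone y w hw]
      · rw [h2 w hw, hVsome y w hw]
  have hCdisj : ∀ y y', y ≠ y' → Disjoint (C y) (C y') := by
    intro y y' hne
    rw [Set.disjoint_left]
    intro x hx hx'
    have hw : ∃ w, y w ≠ y' w := by
      by_contra h; push_neg at h; exact hne (funext h)
    obtain ⟨w, hw⟩ := hw
    have e1 := ((memC y x).mp hx).2 w.1 w.2
    have e2 := ((memC y' x).mp hx').2 w.1 w.2
    rw [e1] at e2
    exact hw (by injection e2)
  have hCmeas : ∀ y, MeasurableSet (C y) := fun y => mCyl _ _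
  have hCmeasure : ∀ y, μL (C y) =
      ENNReal.ofReal (1 - 2*p) ^ (Wd t c d).card * ENNReal.ofReal p ^ (Vd t c d).card := by
    intro y
    rw [hC]
    show μL {x | ∀ g ∈ Wd t c d ∪ Vd t c d, x g = vy y g} = _
    rw [cyl hμL, Finset.prod_union hdisj]
    congr 1
    · rw [Finset.prod_congr rfl (fun w hw => by rw [hWnone y w hw, hlamstar]),
        Finset.prod_const]
    · rw [Finset.prod_congr rfl (fun w hw => by rw [hVsome y w hw, hlam]),
        Finset.prod_const]
  set zfun : {g // g ∈ s1 t c} → ZMod 2 × ZMod 2 := fun gs => (c gs.1).iget with hzfun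
  have c_some : ∀ gs : {g // g ∈ s1 t c}, c gs.1 = some (zfun gs) :=
    fun gs => optSome ((Finset.mem_filter.mp gs.2).2)
  set sols : Finset ({w // w ∈ Vd t c d} → ZMod 2) := Finset.univ.filter
    (fun y => Phi (s1 t c) (Vd t c d) (kk t c d) (llf t c d)
      (hVg' t c d) (hVa' t c d) (hVb' t c d) y = zfun) with hsols
  have hEd : Ed t c d = ⋃ y ∈ sols, C y := by
    ext x
    simp only [Set.mem_iUnion, exists_prop]
    constructor
    · rintro ⟨⟨hP, hW, hV⟩, heq⟩
      refine ⟨fun w => (x w.1).iget, ?_, ?_⟩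
      · rw [hsols, Finset.mem_filter]
        refine ⟨Finset.mem_univ _, ?_⟩
        funext gs
        obtain ⟨i, u, v, hz, h1, h2, h3⟩ := heq gs.1 gs.2
        show ((x gs.1).iget + (x (gs.1 * fa ^ kk t c d gs.1)).iget,
              (x gs.1).iget + (x (gs.1 * fb ^ llf t c d gs.1)).iget) = zfun gs
        rw [h1, h2, h3]
        change (i + u, i + v) = _
        have := c_some gs
        rw [← hz] at this
        exact Option.some_inj.mp this
      · exact (memC (fun w => (x w.1).iget) x).mpr ⟨hW, fun w hw => optSome (hV w hw)⟩
    · rintro ⟨y, hy, hxC⟩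
      obtain ⟨hW, hV⟩ := (memC y x).mp hxC
      have hAd : x ∈ Ad t c d :=
        ⟨hPos, hW, fun w hw => by rw [hV w hw]; simp⟩
      refine ⟨hAd, fun g hg => ?_⟩
      rw [hsols, Finset.mem_filter] at hy
      have := congrFun hy.2 ⟨g, hg⟩
      have hphi : (y ⟨g, hVg' t c d g hg⟩ + y ⟨g * fa ^ kk t c d g, hVa' t c d g hg⟩,
          y ⟨g, hVg' t c d g hg⟩ + y ⟨g * fb ^ llf t c d g, hVb' t c d g hg⟩)
          = zfun ⟨g, hg⟩ := this
      refine ⟨y ⟨g, hVg' t c d g hg⟩, y ⟨g * fa ^ kk t c d g, hVa' t c d g hg⟩,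
        y ⟨g * fb ^ llf t c d g, hVb' t c d g hg⟩, ?_, hV g (hVg' t c d g hg),
        hV _ (hVa' t c d g hg), hV _ (hVb' t c d g hg)⟩
      rw [hphi, ← c_some ⟨g, hg⟩]
  have hAdU : Ad t c d = ⋃ y ∈ (Finset.univ : Finset ({w // w ∈ Vd t c d} → ZMod 2)), C y := by
    ext x
    simp only [Set.mem_iUnion, exists_prop]
    constructor
    · rintro ⟨hP, hW, hV⟩
      exact ⟨fun w => (x w.1).iget, Finset.mem_univ _,
        (memC (fun w => (x w.1).iget) x).mpr ⟨hW, fun w hw => optSome (hV w hw)⟩⟩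
    · rintro ⟨y, -, hxC⟩
      obtain ⟨hW, hV⟩ := (memC y x).mp hxC
      exact ⟨hPos, hW, fun w hw => by rw [hV w hw]; simp⟩
  have hsum1 : μL (Ed t c d) = sols.card •
      (ENNReal.ofReal (1 - 2*p) ^ (Wd t c d).card * ENNReal.ofReal p ^ (Vd t c d).card) := by
    rw [hEd, measure_biUnion_finset ?_ (fun y _ => hCmeas y)]
    · rw [Finset.sum_congr rfl (fun y _ => hCmeasure y), Finset.sum_const]
    · intro y hy y' hy' hne
      exact hCdisj y y' hne
  have hsum2 : μL (Ad t c d) = (Finset.univ : Finset ({w // w ∈ Vd t c d} → ZMod 2)).card •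
      (ENNReal.ofReal (1 - 2*p) ^ (Wd t c d).card * ENNReal.ofReal p ^ (Vd t c d).card) := by
    rw [hAdU, measure_biUnion_finset ?_ (fun y _ => hCmeas y)]
    · rw [Finset.sum_congr rfl (fun y _ => hCmeasure y), Finset.sum_const]
    · intro y hy y' hy' hne
      exact hCdisj y y' hne
  have hcnt := count (s1 t c) (Vd t c d) (kk t c d) (llf t c d) hk hl
    (hVg' t c d) (hVa' t c d) (hVb' t c d) nogapa nogapb zfun
  have hcard : (Finset.univ : Finset ({w // w ∈ Vd t c d} → ZMod 2)).card
      = 2 ^ (Vd t c d).card := by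
    rw [Finset.card_univ, Fintype.card_fun, ZMod.card, Fintype.card_coe]
  rw [hsum1, hsum2, hcard, nsmul_eq_mul, nsmul_eq_mul]
  have h4 : ((4 : ℝ≥0∞)) ^ (s1 t c).card = ((4 ^ (s1 t c).card : ℕ) : ℝ≥0∞) := by
    push_cast; ring
  rw [mul_right_comm, h4, ← Nat.cast_mul, hcnt]
end Decomp

section MainSec
variable (t : Finset F2) (c : F2 → Mo)

def Ecyl : Set (F2 → Lo) := {x | ∀ g ∈ t, phi x g = c g}
def Pset : Set (F2 → Lo) := {x | (∀ g ∈ s0 t c, x g = none) ∧ (∀ g ∈ s1 t c, x g ≠ none)}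

lemma E_sub_union : Ecyl t c ∩ Xgood ⊆ ⋃ d : Idx t c, Ed t c d := by
  rintro x ⟨hxE, hxG⟩
  have hgood : ∀ g, goodA x g ∧ goodB x g := hxG
  set d : Idx t c := fun gs => (hitA x gs.1, hitB x gs.1) with hd
  refine Set.mem_iUnion.mpr ⟨d, ?_⟩
  have hPos : PosD t c d := fun gs => ⟨hitA_pos (hgood gs.1).1, hitB_pos (hgood gs.1).2⟩
  have hkk : ∀ g (hg : g ∈ s1 t c), kk t c d g = hitA x g := fun g hg => kk_mem t c d hg
  have hll : ∀ g (hg : g ∈ s1 t c), llf t c d g = hitB x g := fun g hg => llf_mem t c d hg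
  have hVnn : ∀ w ∈ Vd t c d, x w ≠ none := by
    intro w hw
    rcases Finset.mem_union.mp hw with hw' | hw'
    · rcases Finset.mem_union.mp hw' with hw'' | hw''
      · have hct : c w ≠ none := (Finset.mem_filter.mp hw'').2
        have hwt := (Finset.mem_filter.mp hw'').1
        intro hnone
        exact hct (by rw [← hxE w hwt, phi_none hnone])
      · obtain ⟨g, hg, rfl⟩ := Finset.mem_image.mp hw''
        rw [hkk g hg]
        exact Option.isSome_iff_ne_none.mp (hitA_isSome (hgood g).1)
    · obtain ⟨g, hg, rfl⟩ := Finset.mem_image.mp hw'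
      rw [hll g hg]
      exact Option.isSome_iff_ne_none.mp (hitB_isSome (hgood g).2)
  refine ⟨⟨hPos, ?_, hVnn⟩, ?_⟩
  · intro w hw
    rcases Finset.mem_union.mp hw with hw' | hw'
    · rcases Finset.mem_union.mp hw' with hw'' | hw''
      · have hct : c w = none := (Finset.mem_filter.mp hw'').2
        have hwt : w ∈ t := (Finset.mem_filter.mp hw'').1
        have hphi := hxE w hwt
        by_contra hne
        obtain ⟨i, hi⟩ := Option.ne_none_iff_exists'.mp hne
        rw [phi_some hi (hgood w).1 (hgood w).2, hct] at hphi
        exact Option.some_ne_none _ hphi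
      · obtain ⟨g, hg, hj⟩ := Finset.mem_biUnion.mp hw''
        obtain ⟨j, hj2, rfl⟩ := Finset.mem_image.mp hj
        rw [Finset.mem_Ioo, hkk g hg] at hj2
        exact hitA_min (hgood g).1 hj2.1 hj2.2
    · obtain ⟨g, hg, hj⟩ := Finset.mem_biUnion.mp hw'
      obtain ⟨j, hj2, rfl⟩ := Finset.mem_image.mp hj
      rw [Finset.mem_Ioo, hll g hg] at hj2
      exact hitB_min (hgood g).2 hj2.1 hj2.2
  · intro g hg
    have hwt : g ∈ t := (Finset.mem_filter.mp hg).1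
    obtain ⟨i, hi⟩ := Option.ne_none_iff_exists'.mp (hVnn g (hVg' t c d g hg))
    obtain ⟨u, hu⟩ := Option.isSome_iff_exists.mp (hitA_isSome (hgood g).1)
    obtain ⟨v, hv⟩ := Option.isSome_iff_exists.mp (hitB_isSome (hgood g).2)
    refine ⟨i, u, v, ?_, hi, by rw [hkk g hg]; exact hu, by rw [hll g hg]; exact hv⟩
    rw [← hxE g hwt, phi_some hi (hgood g).1 (hgood g).2, hu, hv]
    all_goals simp only [Option.iget_some]

lemma Ed_sub_E : ∀ d : Idx t c, Ed t c d ∩ Xgood ⊆ Ecyl t c := by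
  rintro d x ⟨⟨⟨hP, hW, hV⟩, heq⟩, hxG⟩
  intro g hgt
  by_cases hc : c g = none
  · have hg0 : g ∈ s0 t c := Finset.mem_filter.mpr ⟨hgt, hc⟩
    rw [phi_none (hW g (s0_subW t c d g hg0)), hc]
  · have hg1 : g ∈ s1 t c := Finset.mem_filter.mpr ⟨hgt, hc⟩
    obtain ⟨i, u, v, hz, h1, h2, h3⟩ := heq g hg1
    have hA := (hxG g).1
    have hB := (hxG g).2
    have hkpos : 0 < kk t c d g := by rw [kk_mem t c d hg1]; exact (hP ⟨g, hg1⟩).1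
    have hlpos : 0 < llf t c d g := by rw [llf_mem t c d hg1]; exact (hP ⟨g, hg1⟩).2
    have hka : hitA x g = kk t c d g := hitA_eq hA hkpos (by rw [h2]; rfl)
      (fun j hj0 hjk => hW _ (gapA_mem t c d hg1 hj0 hjk))
    have hlb : hitB x g = llf t c d g := hitB_eq hB hlpos (by rw [h3]; rfl)
      (fun j hj0 hjk => hW _ (gapB_mem t c d hg1 hj0 hjk))
    rw [phi_some h1 hA hB, hka, hlb, h2, h3]
    change some (i + u, i + v) = _
    exact hz

lemma P_sub_union : Pset t c ∩ Xgood ⊆ ⋃ d : Idx t c, Ad t c d := by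
  rintro x ⟨⟨hx0, hx1⟩, hxG⟩
  have hgood : ∀ g, goodA x g ∧ goodB x g := hxG
  set d : Idx t c := fun gs => (hitA x gs.1, hitB x gs.1) with hd
  refine Set.mem_iUnion.mpr ⟨d, ?_⟩
  have hPos : PosD t c d := fun gs => ⟨hitA_pos (hgood gs.1).1, hitB_pos (hgood gs.1).2⟩
  have hkk : ∀ g (hg : g ∈ s1 t c), kk t c d g = hitA x g := fun g hg => kk_mem t c d hg
  have hll : ∀ g (hg : g ∈ s1 t c), llf t c d g = hitB x g := fun g hg => llf_mem t c d hg
  refine ⟨hPos, ?_, ?_⟩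
  · intro w hw
    rcases Finset.mem_union.mp hw with hw' | hw'
    · rcases Finset.mem_union.mp hw' with hw'' | hw''
      · exact hx0 w hw''
      · obtain ⟨g, hg, hj⟩ := Finset.mem_biUnion.mp hw''
        obtain ⟨j, hj2, rfl⟩ := Finset.mem_image.mp hj
        rw [Finset.mem_Ioo, hkk g hg] at hj2
        exact hitA_min (hgood g).1 hj2.1 hj2.2
    · obtain ⟨g, hg, hj⟩ := Finset.mem_biUnion.mp hw'
      obtain ⟨j, hj2, rfl⟩ := Finset.mem_image.mp hj
      rw [Finset.mem_Ioo, hll g hg] at hj2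
      exact hitB_min (hgood g).2 hj2.1 hj2.2
  · intro w hw
    rcases Finset.mem_union.mp hw with hw' | hw'
    · rcases Finset.mem_union.mp hw' with hw'' | hw''
      · exact hx1 w hw''
      · obtain ⟨g, hg, rfl⟩ := Finset.mem_image.mp hw''
        rw [hkk g hg]
        exact Option.isSome_iff_ne_none.mp (hitA_isSome (hgood g).1)
    · obtain ⟨g, hg, rfl⟩ := Finset.mem_image.mp hw'
      rw [hll g hg]
      exact Option.isSome_iff_ne_none.mp (hitB_isSome (hgood g).2)

lemma Ad_sub_P : ∀ d : Idx t c, Ad t c d ⊆ Pset t c := by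
  rintro d x ⟨hP, hW, hV⟩
  exact ⟨fun g hg => hW g (s0_subW t c d g hg), fun g hg => hV g (hVg' t c d g hg)⟩

lemma main_measure {p : ℝ} (hp : 0 < p) (hp' : p < 1/2)
    {lam : Measure Lo} {μL : Measure (F2 → Lo)}
    (hlam : ∀ i : ZMod 2, lam {some i} = ENNReal.ofReal p)
    (hlamstar : lam {none} = ENNReal.ofReal (1 - 2*p))
    (hμL : IsProductMeasure μL (fun _ : F2 => lam)) :
    μL (Ecyl t c) = ENNReal.ofReal (1 - 2*p) ^ (s0 t c).card
      * ENNReal.ofReal (p/2) ^ (s1 t c).card := by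
  classical
  haveI := hμL.1
  have hXnull : μL Xgoodᶜ = 0 := Xgood_null hp hp' hlamstar hμL
  have sandwich : ∀ (E U : Set (F2 → Lo)), E ∩ Xgood ⊆ U → U ⊆ E ∪ Xgoodᶜ → μL E = μL U := by
    intro E U h1 h2
    apply le_antisymm
    · have hEsub : E ⊆ U ∪ Xgoodᶜ := by
        intro x hx
        by_cases hg : x ∈ Xgood
        · exact Or.inl (h1 ⟨hx, hg⟩)
        · exact Or.inr hg
      calc μL E ≤ μL (U ∪ Xgoodᶜ) := measure_mono hEsub
        _ ≤ μL U + μL Xgoodᶜ := measure_union_le _ _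
        _ = μL U := by rw [hXnull, add_zero]
    · calc μL U ≤ μL (E ∪ Xgoodᶜ) := measure_mono h2
        _ ≤ μL E + μL Xgoodᶜ := measure_union_le _ _
        _ = μL E := by rw [hXnull, add_zero]
  have hE1 : μL (Ecyl t c) = μL (⋃ d : Idx t c, Ed t c d) := by
    apply sandwich _ _ (E_sub_union t c)
    intro x hx
    obtain ⟨d, hd⟩ := Set.mem_iUnion.mp hx
    by_cases hg : x ∈ Xgood
    · exact Or.inl (Ed_sub_E t c d ⟨hd, hg⟩)
    · exact Or.inr hg
  have hP1 : μL (Pset t c) = μL (⋃ d : Idx t c, Ad t c d) := by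
    apply sandwich _ _ (P_sub_union t c)
    intro x hx
    obtain ⟨d, hd⟩ := Set.mem_iUnion.mp hx
    exact Or.inl (Ad_sub_P t c d hd)
  have hE2 : μL (⋃ d : Idx t c, Ed t c d) = ∑' d : Idx t c, μL (Ed t c d) :=
    measure_iUnion (Ed_disj t c) (mEd t c)
  have hA2 : μL (⋃ d : Idx t c, Ad t c d) = ∑' d : Idx t c, μL (Ad t c d) :=
    measure_iUnion (Ad_disj t c) (mAd t c)
  have hper : ∀ d : Idx t c, μL (Ed t c d)
      = (4:ℝ≥0∞)⁻¹ ^ (s1 t c).card * μL (Ad t c d) := by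
    intro d
    by_cases hA : Ad t c d = ∅
    · have hE0 : μL (Ed t c d) = 0 := by
        apply le_antisymm _ (zero_le)
        calc μL (Ed t c d) ≤ μL (Ad t c d) := measure_mono (Ed_subset_Ad t c d)
          _ = 0 := by rw [hA]; simp
      rw [hE0, hA]
      simp
    · obtain ⟨x₀, hx₀⟩ := Set.nonempty_iff_ne_empty.mpr hA
      have hPos : PosD t c d := hx₀.1
      have hdisj : Disjoint (Wd t c d) (Vd t c d) := by
        rw [Finset.disjoint_left]
        intro w hw hw'
        exact (hx₀.2.2 w hw') (hx₀.2.1 w hw)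
      have heq := Ed_mul_card t c d hlam hlamstar hμL hPos hdisj
      rw [← heq]
      have hcancel : (4:ℝ≥0∞)⁻¹ ^ (s1 t c).card * (4:ℝ≥0∞) ^ (s1 t c).card = 1 := by
        rw [← mul_pow, ENNReal.inv_mul_cancel (by norm_num) (by norm_num), one_pow]
      rw [mul_comm ((4:ℝ≥0∞)⁻¹ ^ (s1 t c).card) _, mul_assoc, mul_comm ((4:ℝ≥0∞) ^ _) _,
        hcancel, mul_one]
  have hPm : μL (Pset t c) = ENNReal.ofReal (1 - 2*p) ^ (s0 t c).card
      * (2 * ENNReal.ofReal p) ^ (s1 t c).card := by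
    have h01 : ∀ j : ZMod 2, j = 0 ∨ j = 1 := by decide
    have hset : Pset t c = {x | ∀ g ∈ t,
        x g ∈ (fun g => if c g = none then ({none} : Set Lo) else {some 0, some 1}) g} := by
      ext x
      simp only [Pset, Set.mem_setOf_eq]
      constructor
      · rintro ⟨h0, h1⟩ g hg
        by_cases hc : c g = none
        · simp only [if_pos hc]
          simp [h0 g (Finset.mem_filter.mpr ⟨hg, hc⟩)]
        · have hne := h1 g (Finset.mem_filter.mpr ⟨hg, hc⟩)
          simp only [if_neg hc]
          rcases hxg : x g with _ | i
          · exact absurd hxg hne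
          · rcases h01 i with rfl | rfl
            · exact Set.mem_insert _ _
            · exact Set.mem_insert_of_mem _ rfl
      · intro h
        constructor
        · intro g hg
          have hgt := (Finset.mem_filter.mp hg).1
          have hc := (Finset.mem_filter.mp hg).2
          have := h g hgt
          rw [if_pos hc] at this
          simpa using this
        · intro g hg
          have hgt := (Finset.mem_filter.mp hg).1
          have hc := (Finset.mem_filter.mp hg).2
          have := h g hgt
          rw [if_neg hc] at this
          simp only [Set.mem_insert_iff, Set.mem_singleton_iff] at this
          rcases this with h' | h' <;> simp [h']
    rw [hset, hμL.2 _ _ (fun i _ => trivial)]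
    have h2lam : lam {some 0, some 1} = 2 * ENNReal.ofReal p := by
      rw [Set.insert_eq, measure_union (by simp) (by trivial : MeasurableSet ({some 1} : Set Lo)),
        hlam, hlam, two_mul]
    have hsplit := Finset.prod_filter_mul_prod_filter_not t (fun g => c g = none)
      (fun g => lam (if c g = none then ({none} : Set Lo) else {some 0, some 1}))
    rw [← hsplit]
    congr 1
    · have hcg : ∀ g ∈ t.filter (fun g => c g = none),
          lam (if c g = none then ({none} : Set Lo) else {some 0, some 1})
            = ENNReal.ofReal (1 - 2*p) := fun g hg => by
        rw [if_pos (Finset.mem_filter.mp hg).2, hlamstar]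
      rw [Finset.prod_congr rfl hcg, Finset.prod_const]
      rfl
    · have hcg : ∀ g ∈ t.filter (fun g => ¬ c g = none),
          lam (if c g = none then ({none} : Set Lo) else {some 0, some 1})
            = 2 * ENNReal.ofReal p := fun g hg => by
        rw [if_neg (Finset.mem_filter.mp hg).2, h2lam]
      rw [Finset.prod_congr rfl hcg, Finset.prod_const]
      rfl
  have harith : (4:ℝ≥0∞)⁻¹ * (2 * ENNReal.ofReal p) = ENNReal.ofReal (p/2) := by
    have h2 : ENNReal.ofReal (p/2) = ENNReal.ofReal p * 2⁻¹ := by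
      rw [ENNReal.ofReal_div_of_pos (by norm_num), div_eq_mul_inv]
      congr 1
      rw [ENNReal.ofReal_ofNat]
    have hcancel : (2:ℝ≥0∞)⁻¹ * 2 = 1 := ENNReal.inv_mul_cancel (by norm_num) (by norm_num)
    rw [h2, show (4:ℝ≥0∞) = 2 * 2 by norm_num,
      ENNReal.mul_inv (by norm_num) (by norm_num)]
    calc (2:ℝ≥0∞)⁻¹ * 2⁻¹ * (2 * ENNReal.ofReal p)
        = (2⁻¹ * 2) * (2⁻¹ * ENNReal.ofReal p) := by ring
      _ = 2⁻¹ * ENNReal.ofReal p := by rw [hcancel, one_mul]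
      _ = ENNReal.ofReal p * 2⁻¹ := mul_comm _ _
  rw [hE1, hE2, tsum_congr hper, ENNReal.tsum_mul_left, ← hA2, ← hP1, hPm,
    mul_comm (ENNReal.ofReal (1 - 2*p) ^ (s0 t c).card) _, ← mul_assoc, ← mul_pow, harith]
  ring

end MainSec

def Ccyl : Set (Set (F2 → Mo)) :=
  {S | ∃ (u : Finset F2) (v : F2 → Mo), S = {x | ∀ g ∈ u, x g = v g}}

lemma isPiSystem_Ccyl : IsPiSystem Ccyl := by
  classical
  rintro S ⟨u1, v1, rfl⟩ S' ⟨u2, v2, rfl⟩ hne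
  obtain ⟨x₀, hx₀⟩ := hne
  obtain ⟨h1, h2⟩ := hx₀
  refine ⟨u1 ∪ u2, fun g => if g ∈ u1 then v1 g else v2 g, ?_⟩
  ext x
  simp only [Set.mem_inter_iff, Set.mem_setOf_eq, Finset.mem_union]
  constructor
  · rintro ⟨hA, hB⟩ g hg
    rcases hg with hg | hg
    · rw [if_pos hg]; exact hA g hg
    · by_cases hg1 : g ∈ u1
      · rw [if_pos hg1]; exact hA g hg1
      · rw [if_neg hg1]; exact hB g hg
  · intro h
    constructor
    · intro g hg
      have := h g (Or.inl hg); rwa [if_pos hg] at this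
    · intro g hg
      have hx := h g (Or.inr hg)
      by_cases hg1 : g ∈ u1
      · rw [if_pos hg1] at hx
        rw [hx, ← h1 g hg1]
        exact h2 g hg
      · rwa [if_neg hg1] at hx

lemma gen_eq : (inferInstance : MeasurableSpace (F2 → Mo)) = MeasurableSpace.generateFrom Ccyl := by
  apply le_antisymm
  · show (MeasurableSpace.pi : MeasurableSpace (F2 → Mo)) ≤ _
    apply iSup_le
    intro g
    intro s hs
    obtain ⟨s', -, rfl⟩ := hs
    have hU : (fun x : F2 → Mo => x g) ⁻¹' s' = ⋃ m : s', {x : F2 → Mo | x g = m.1} := by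
      ext x
      simp only [Set.mem_preimage, Set.mem_iUnion, Set.mem_setOf_eq]
      constructor
      · intro hx; exact ⟨⟨x g, hx⟩, rfl⟩
      · rintro ⟨m, hm⟩; rw [hm]; exact m.2
    show MeasurableSet[MeasurableSpace.generateFrom Ccyl] _
    rw [hU]
    refine MeasurableSet.iUnion fun m => ?_
    apply MeasurableSpace.measurableSet_generateFrom
    refine ⟨{g}, fun _ => m.1, ?_⟩
    ext x
    simp
  · apply MeasurableSpace.generateFrom_le
    rintro S ⟨u, v, rfl⟩
    exact mCylM u v

lemma map_phi {p : ℝ} (hp : 0 < p) (hp' : p < 1/2)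
    {lam : Measure Lo} {mu : Measure Mo} {μL : Measure (F2 → Lo)} {μM : Measure (F2 → Mo)}
    (hlam : ∀ i : ZMod 2, lam {some i} = ENNReal.ofReal p)
    (hlamstar : lam {none} = ENNReal.ofReal (1 - 2*p))
    (hmu : ∀ z : ZMod 2 × ZMod 2, mu {some z} = ENNReal.ofReal (p/2))
    (hmustar : mu {none} = ENNReal.ofReal (1 - 2*p))
    (hμL : IsProductMeasure μL (fun _ : F2 => lam))
    (hμM : IsProductMeasure μM (fun _ : F2 => mu)) :
    Measure.map phi μL = μM := by
  classical
  haveI := hμL.1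
  haveI := hμM.1
  haveI : IsProbabilityMeasure (Measure.map phi μL) :=
    Measure.isProbabilityMeasure_map measurable_phi.aemeasurable
  apply MeasureTheory.ext_of_generate_finite Ccyl gen_eq isPiSystem_Ccyl
  · rintro S ⟨u, v, rfl⟩
    rw [Measure.map_apply measurable_phi (mCylM u v)]
    have hpre : phi ⁻¹' {x : F2 → Mo | ∀ g ∈ u, x g = v g} = Ecyl u v := rfl
    rw [hpre, main_measure u v hp hp' hlam hlamstar hμL]
    have hM := hμM.2 u (fun g => {v g}) (fun i _ => trivial)
    have hMc : μM {x : F2 → Mo | ∀ g ∈ u, x g = v g} = ∏ g ∈ u, mu {v g} := by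
      simpa using hM
    rw [hMc, ← Finset.prod_filter_mul_prod_filter_not u (fun g => v g = none)]
    congr 1
    · have hcg : ∀ g ∈ u.filter (fun g => v g = none), mu {v g} = ENNReal.ofReal (1 - 2*p) :=
        fun g hg => by rw [(Finset.mem_filter.mp hg).2, hmustar]
      rw [Finset.prod_congr rfl hcg, Finset.prod_const]
      rfl
    · have hcg : ∀ g ∈ u.filter (fun g => ¬ v g = none), mu {v g} = ENNReal.ofReal (p/2) :=
        fun g hg => by
          rw [optSome (Finset.mem_filter.mp hg).2, hmu]
      rw [Finset.prod_congr rfl hcg, Finset.prod_const]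
      rfl
  · simp [measure_univ]

end Weiss

/-- (Weiss's construction.) Let `λ({0}) = λ({1}) = p`, `λ({*}) = 1 - 2p` on `L = {0,1,*}`
and `μ({z}) = p/2` for `z ∈ ℤ/2ℤ × ℤ/2ℤ`, `μ({*}) = 1 - 2p` on `M = (ℤ/2ℤ)² ⊔ {*}`.
Then the map `φ` given by `φ(x)(g) = *` if `x(g) = *` and otherwise
`φ(x)(g) = (x(g) + x(ga^k), x(g) + x(gb^l))`, with `k, l` the least positive integers such
that `x(ga^k), x(gb^l) ∈ ℤ/2ℤ`, is defined on a shift-invariant set of full `λ^𝔽`-measure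
and is a factor map from `(𝔽, L^𝔽, λ^𝔽)` onto `(𝔽, M^𝔽, μ^𝔽)`. -/

theorem weiss_factor_map
    (p : ℝ) (hp : 0 < p) (hp' : p < 1/2)
    (lam : Measure (Option (ZMod 2))) [IsProbabilityMeasure lam]
    (hlam : ∀ i : ZMod 2, lam {some i} = ENNReal.ofReal p)
    (hlamstar : lam {none} = ENNReal.ofReal (1 - 2*p))
    (mu : Measure (Option (ZMod 2 × ZMod 2))) [IsProbabilityMeasure mu]
    (hmu : ∀ z : ZMod 2 × ZMod 2, mu {some z} = ENNReal.ofReal (p/2))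
    (hmustar : mu {none} = ENNReal.ofReal (1 - 2*p))
    (μL : Measure (F2 → Option (ZMod 2)))
    (hμL : IsProductMeasure μL (fun _ => lam))
    (μM : Measure (F2 → Option (ZMod 2 × ZMod 2)))
    (hμM : IsProductMeasure μM (fun _ => mu)) :
    ∃ (φ : (F2 → Option (ZMod 2)) → F2 → Option (ZMod 2 × ZMod 2))
      (X' : Set (F2 → Option (ZMod 2))),
      IsFactorMapOn (bshift F2 (Option (ZMod 2))) (bshift F2 (Option (ZMod 2 × ZMod 2)))
        μL μM φ X' ∧
      ∀ x ∈ X', ∀ g : F2,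
        (x g = none → φ x g = none) ∧
        (∀ i : ZMod 2, x g = some i →
          ∃ k l : ℕ, 0 < k ∧ 0 < l ∧
            (∀ j : ℕ, 0 < j → j < k → x (g * fa ^ j) = none) ∧
            (∀ j : ℕ, 0 < j → j < l → x (g * fb ^ j) = none) ∧
            ∃ u v : ZMod 2, x (g * fa ^ k) = some u ∧ x (g * fb ^ l) = some v ∧
              φ x g = some (i + u, i + v)) := by
  classical
  refine ⟨Weiss.phi, Weiss.Xgood,
    ⟨Weiss.measurable_phi, ?_, Weiss.Xgood_null hp hp' hlamstar hμL, ?_, ?_⟩, ?_⟩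
  · exact fun g x hx => Weiss.Xgood_invariant g hx
  · exact fun g x _ => Weiss.phi_bshift g x
  · exact Weiss.map_phi hp hp' hlam hlamstar hmu hmustar hμL hμM
  · intro x hx g
    constructor
    · intro h
      exact Weiss.phi_none h
    · intro i hi
      have hA := (hx g).1
      have hB := (hx g).2
      obtain ⟨u, hu⟩ := Option.isSome_iff_exists.mp (Weiss.hitA_isSome hA)
      obtain ⟨v, hv⟩ := Option.isSome_iff_exists.mp (Weiss.hitB_isSome hB)
      refine ⟨Weiss.hitA x g, Weiss.hitB x g, Weiss.hitA_pos hA, Weiss.hitB_pos hB,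
        fun j h0 hj => Weiss.hitA_min hA h0 hj, fun j h0 hj => Weiss.hitB_min hB h0 hj,
        u, v, hu, hv, ?_⟩
      rw [Weiss.phi_some hi hA hB, hu, hv]
      all_goals simp only [Option.iget_some]
end

section
/- Define f: (0, 1/2) → ℝ by f(p) = −2p·log p − (1−2p)·log(1−2p). Suppose (q_n)_{n≥0} and (p_n)_{n≥1} are sequences of real numbers such that q₀ > 0 and, for every n ≥ 0: q_n < log 2, p_{n+1} ∈ (0, 1/2), f(p_{n+1}) = q_n, and q_{n+1} = q_n + 2·p_{n+1}·log 2. Then no such pair of infinite sequences exists; equivalently, for any sequences satisfying q₀ > 0, p_{n+1} ∈ (0,1/2), f(p_{n+1}) = q_n and q_{n+1} = q_n + 2 p_{n+1} log 2 whenever q_n < log 2, there exists n with q_n ≥ log 2. -/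
/-- The entropy `f(p) = -2p log p - (1-2p) log(1-2p)` of the probability vector
`(p, p, 1-2p)`, for `p ∈ (0, 1/2)`; `log` is the natural logarithm. -/
noncomputable def entropyF (p : ℝ) : ℝ :=
  -2 * p * Real.log p - (1 - 2 * p) * Real.log (1 - 2 * p)

lemma entropyF_le_six_sqrt (p : ℝ) (h0 : 0 < p) (h1 : p < 1 / 2) :
    entropyF p ≤ 6 * Real.sqrt p := by
  have hs : 0 < Real.sqrt p := Real.sqrt_pos.2 h0
  have hp1 : p ≤ 1 := by linarith
  have h2p : (0:ℝ) < 1 - 2 * p := by linarith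
  -- p ≤ √p
  have hpsqrt : p ≤ Real.sqrt p := by
    nlinarith [Real.sq_sqrt h0.le, Real.sqrt_nonneg p]
  -- -log √p ≤ 1/√p - 1
  have hlogs : -Real.log (Real.sqrt p) ≤ 1 / Real.sqrt p - 1 := by
    have := Real.log_le_sub_one_of_pos (show (0:ℝ) < 1 / Real.sqrt p by positivity)
    rwa [Real.log_div one_ne_zero (ne_of_gt hs), Real.log_one, zero_sub] at this
  have hlogp : -Real.log p ≤ 2 * (1 / Real.sqrt p - 1) := by
    have : Real.log p = 2 * Real.log (Real.sqrt p) := by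
      rw [Real.log_sqrt h0.le]; ring
    linarith
  -- first term
  have t1 : -2 * p * Real.log p ≤ 4 * Real.sqrt p := by
    have h1' : -2 * p * Real.log p = 2 * p * (-Real.log p) := by ring
    have h2' : 2 * p * (-Real.log p) ≤ 2 * p * (2 * (1 / Real.sqrt p - 1)) := by
      apply mul_le_mul_of_nonneg_left hlogp (by linarith)
    have hdiv : p / Real.sqrt p = Real.sqrt p := Real.div_sqrt
    have : 2 * p * (2 * (1 / Real.sqrt p - 1)) = 4 * (p / Real.sqrt p) - 4 * p := by
      field_simp; ring
    rw [h1']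
    calc 2 * p * (-Real.log p) ≤ 4 * (p / Real.sqrt p) - 4 * p := by linarith
      _ = 4 * Real.sqrt p - 4 * p := by rw [hdiv]
      _ ≤ 4 * Real.sqrt p := by linarith
  -- second term
  have t2 : -(1 - 2 * p) * Real.log (1 - 2 * p) ≤ 2 * Real.sqrt p := by
    have hlog2 : -Real.log (1 - 2 * p) ≤ 1 / (1 - 2 * p) - 1 := by
      have := Real.log_le_sub_one_of_pos (show (0:ℝ) < 1 / (1 - 2 * p) by positivity)
      rwa [Real.log_div one_ne_zero (ne_of_gt h2p), Real.log_one, zero_sub] at this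
    have h2' : (1 - 2 * p) * (-Real.log (1 - 2 * p)) ≤
        (1 - 2 * p) * (1 / (1 - 2 * p) - 1) := by
      apply mul_le_mul_of_nonneg_left hlog2 h2p.le
    have heq : (1 - 2 * p) * (1 / (1 - 2 * p) - 1) = 2 * p := by
      field_simp; ring
    nlinarith
  unfold entropyF
  nlinarith

/-- The recursion `q_{n+1} = q_n + 2 p_{n+1} log 2`, where `p_{n+1} ∈ (0, 1/2)` solves
`f(p_{n+1}) = q_n`, must reach or exceed `log 2` in finitely many steps whenever `q₀ > 0`. -/
theorem recursion_reaches_log_two (q : ℕ → ℝ) (p : ℕ → ℝ) (hq0 : 0 < q 0)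
    (h : ∀ n : ℕ, q n < Real.log 2 →
      0 < p (n + 1) ∧ p (n + 1) < 1 / 2 ∧ entropyF (p (n + 1)) = q n ∧
        q (n + 1) = q n + 2 * p (n + 1) * Real.log 2) :
    ∃ n : ℕ, Real.log 2 ≤ q n := by
  by_contra hcon
  push_neg at hcon
  have hlog2 : (0:ℝ) < Real.log 2 := Real.log_pos (by norm_num)
  set c : ℝ := (q 0 / 6) ^ 2 with hc
  have hcpos : 0 < c := by positivity
  set δ : ℝ := 2 * c * Real.log 2 with hδ
  have hδpos : 0 < δ := by positivity
  -- q grows at least linearly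
  have key : ∀ n : ℕ, q 0 + n * δ ≤ q n := by
    intro n
    induction n with
    | zero => simp
    | succ n ih =>
      obtain ⟨hp0, hp12, hf, hrec⟩ := h n (hcon n)
      have hqn : q 0 ≤ q n := by
        have : (0:ℝ) ≤ n * δ := by positivity
        linarith
      -- lower bound on p (n+1)
      have hub : q n ≤ 6 * Real.sqrt (p (n + 1)) := by
        rw [← hf]; exact entropyF_le_six_sqrt _ hp0 hp12
      have hsqrt : q 0 / 6 ≤ Real.sqrt (p (n + 1)) := by linarith
      have hpc : c ≤ p (n + 1) := by
        have := Real.sq_sqrt hp0.le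
        nlinarith [Real.sqrt_nonneg (p (n + 1))]
      have : q n + δ ≤ q (n + 1) := by
        rw [hrec, hδ]
        nlinarith
      push_cast
      linarith
  obtain ⟨n, hn⟩ := exists_nat_ge ((Real.log 2 - q 0) / δ)
  have : Real.log 2 - q 0 ≤ n * δ := by
    rw [div_le_iff₀ hδpos] at hn
    linarith
  have := key n
  have := hcon n
  linarith
end
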